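/- For any graph G, z_2(G) ≤ ϑ*(G) ≤ z_1(G) = ϑ(G), where ϑ* is Schrijver's refinement of the Lovász theta function and z_k is the k-th level of the exact subgraph hierarchy. -/

import Mathlib

open scoped Classical


/-- Feasibility for the SDP formulation ϑ₁:
max 1ᵀx s.t. [[X, x],[xᵀ,1]] ⪰ 0, diag(X) = x, X_{ij} = 0 on edges. -/
def Theta1Feasible {V : Type} [Fintype V] (G : SimpleGraph V)
    (x : V → ℝ) (X : Matrix V V ℝ) : Prop :=
  (Matrix.fromBlocks X (Matrix.of fun i (_ : Unit) => x i)
      (Matrix.of fun (_ : Unit) j => x j) 1).PosSemidef ∧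
  (∀ i, X i i = x i) ∧ (∀ i j, G.Adj i j → X i j = 0)

/-- The squared stable set polytope STAB²(H): the convex hull of the outer
products ssᵀ of incidence vectors s of stable sets of H. -/
def stab2 {W : Type} (H : SimpleGraph W) : Set (Matrix W W ℝ) :=
  convexHull ℝ {M | ∃ s : W → ℝ, (∀ i, s i = 0 ∨ s i = 1) ∧
    (∀ i j, H.Adj i j → s i * s j = 0) ∧ M = Matrix.vecMulVec s s}

/-- The optimal value z_J(G) of the ϑ₁ SDP with the exact subgraph constraint
added for every vertex subset I ∈ J. -/
noncomputable def zJ {V : Type} [Fintype V] (G : SimpleGraph V) (J : Set (Set V)) : ℝ :=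
  sSup {t | ∃ (x : V → ℝ) (X : Matrix V V ℝ), Theta1Feasible G x X ∧
    (∀ I ∈ J, X.submatrix (fun a : I => (a : V)) (fun a : I => (a : V)) ∈
      stab2 (G.induce I)) ∧
    t = ∑ i, x i}

/-- The k-th level z_k(G) of the exact subgraph hierarchy: exact subgraph
constraints for all k-element vertex subsets (with the convention
z_k(G) = z_n(G) for k > n). -/
noncomputable def zk {V : Type} [Fintype V] (G : SimpleGraph V) (k : ℕ) : ℝ :=
  zJ G {I : Set V | I.ncard = min k (Fintype.card V)}

/-- The Lovász theta function of a graph. -/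
noncomputable def lovaszTheta {V : Type} [Fintype V] (G : SimpleGraph V) : ℝ :=
  sSup {t | ∃ X : Matrix V V ℝ, X.PosSemidef ∧ X.trace = 1 ∧
    (∀ i j, G.Adj i j → X i j = 0) ∧ t = ∑ i, ∑ j, X i j}


/-- Schrijver's refinement ϑ* of the Lovász theta function: the theta SDP with
the additional entrywise non-negativity constraint. -/
noncomputable def thetaStar {V : Type} [Fintype V] (G : SimpleGraph V) : ℝ :=
  sSup {t | ∃ X : Matrix V V ℝ, X.PosSemidef ∧ (∀ i j, 0 ≤ X i j) ∧ X.trace = 1 ∧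
    (∀ i j, G.Adj i j → X i j = 0) ∧ t = ∑ i, ∑ j, X i j}

/- ===== helpers ===== -/
open Matrix

section helpers
variable {V : Type} [Fintype V]

open scoped MatrixOrder in
lemma psd_exists_ct {Y : Matrix V V ℝ} (h : Y.PosSemidef) : ∃ B : Matrix V V ℝ, Y = Bᴴ * B := by
  obtain ⟨B, hB⟩ := CStarAlgebra.nonneg_iff_eq_star_mul_self.mp h.nonneg
  exact ⟨B, hB⟩

lemma quad_nonneg {Y : Matrix V V ℝ} (h : Y.PosSemidef) (v : V → ℝ) :
    0 ≤ v ⬝ᵥ Y *ᵥ v := by simpa using h.dotProduct_mulVec_nonneg v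

lemma psd_cs {Y : Matrix V V ℝ} (h : Y.PosSemidef) (u v : V → ℝ) :
    (u ⬝ᵥ Y *ᵥ v) ^ 2 ≤ (u ⬝ᵥ Y *ᵥ u) * (v ⬝ᵥ Y *ᵥ v) := by
  obtain ⟨B, rfl⟩ := psd_exists_ct h
  have key : ∀ a b : V → ℝ, a ⬝ᵥ (Bᴴ * B) *ᵥ b = (B *ᵥ a) ⬝ᵥ (B *ᵥ b) := by
    intro a b
    rw [← mulVec_mulVec, dotProduct_mulVec, vecMul_conjTranspose]
    simp
  rw [key, key, key]
  have := Finset.sum_mul_sq_le_sq_mul_sq Finset.univ (B *ᵥ u) (B *ᵥ v)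
  simpa [dotProduct, sq] using this

lemma blockQuad (X : Matrix V V ℝ) (x : V → ℝ) (v : V → ℝ) (a : ℝ) :
    (Sum.elim v (fun _ => a)) ⬝ᵥ
      ((Matrix.fromBlocks X (Matrix.of fun i (_ : Unit) => x i)
        (Matrix.of fun (_ : Unit) j => x j) 1) *ᵥ (Sum.elim v (fun _ => a)))
    = v ⬝ᵥ X *ᵥ v + 2 * a * (x ⬝ᵥ v) + a ^ 2 := by
  rw [fromBlocks_mulVec]
  simp only [dotProduct, mulVec, Fintype.sum_sum_type, Sum.elim_inl, Sum.elim_inr,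
    Pi.add_apply, Function.comp, Matrix.of_apply, Finset.univ_unique, Finset.sum_singleton,
    Matrix.one_apply_eq, mul_add, Finset.sum_add_distrib]
  ring_nf
  have : ∑ i : V, v i * x i * a = a * ∑ i : V, x i * v i := by
    rw [Finset.mul_sum]; exact Finset.sum_congr rfl fun i _ => by ring
  rw [this]; ring

lemma block_psd_of (X : Matrix V V ℝ) (x : V → ℝ)
    (hsym : ∀ i j, X i j = X j i)
    (hq : ∀ v, (x ⬝ᵥ v) ^ 2 ≤ v ⬝ᵥ X *ᵥ v) :
    (Matrix.fromBlocks X (Matrix.of fun i (_ : Unit) => x i)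
      (Matrix.of fun (_ : Unit) j => x j) 1).PosSemidef := by
  refine Matrix.PosSemidef.of_dotProduct_mulVec_nonneg ?_ ?_
  · show _ = _
    ext i j
    cases i <;> cases j <;>
      simp [conjTranspose_apply, Matrix.one_apply, hsym _ _]
  · intro w
    have hw : w = Sum.elim (w ∘ Sum.inl) (fun _ => w (Sum.inr ())) := by
      funext z
      cases z with
      | inl i => rfl
      | inr u => cases u; rfl
    rw [hw]
    simp only [star_trivial]
    rw [blockQuad]
    nlinarith [hq (w ∘ Sum.inl), sq_nonneg ((x ⬝ᵥ (w ∘ Sum.inl)) + w (Sum.inr ()))]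

lemma block_psd_quad {X : Matrix V V ℝ} {x : V → ℝ}
    (h : (Matrix.fromBlocks X (Matrix.of fun i (_ : Unit) => x i)
      (Matrix.of fun (_ : Unit) j => x j) 1).PosSemidef) :
    (∀ i j, X i j = X j i) ∧
      (∀ (v : V → ℝ) (a : ℝ), 0 ≤ v ⬝ᵥ X *ᵥ v + 2 * a * (x ⬝ᵥ v) + a ^ 2) := by
  constructor
  · intro i j
    have := congrFun (congrFun h.1 (Sum.inl j)) (Sum.inl i)
    simpa [conjTranspose_apply] using this
  · intro v a
    have := h.dotProduct_mulVec_nonneg (Sum.elim v (fun _ => a))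
    rw [star_trivial, blockQuad] at this
    exact this

lemma psd_of_block {X : Matrix V V ℝ} {x : V → ℝ}
    (h : (Matrix.fromBlocks X (Matrix.of fun i (_ : Unit) => x i)
      (Matrix.of fun (_ : Unit) j => x j) 1).PosSemidef) : X.PosSemidef := by
  obtain ⟨hsym, hq⟩ := block_psd_quad h
  refine Matrix.PosSemidef.of_dotProduct_mulVec_nonneg ?_ ?_
  · show _ = _
    ext i j
    simp [conjTranspose_apply, hsym _ _]
  · intro v
    have := hq v 0
    simpa using this

lemma dot_one_mulVec_one (X : Matrix V V ℝ) :
    (fun _ => (1:ℝ)) ⬝ᵥ X *ᵥ (fun _ => (1:ℝ)) = ∑ i, ∑ j, X i j := by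
  simp [dotProduct, mulVec]

lemma dot_ones (x : V → ℝ) : x ⬝ᵥ (fun _ => (1:ℝ)) = ∑ i, x i := by
  simp [dotProduct]

lemma single_quad [DecidableEq V] (X : Matrix V V ℝ) (i : V) :
    Pi.single i (1:ℝ) ⬝ᵥ X *ᵥ Pi.single i (1:ℝ) = X i i := by
  rw [mulVec_single, single_dotProduct]
  simp

lemma theta_le_card {X : Matrix V V ℝ} (hX : X.PosSemidef) (htr : X.trace = 1) :
    ∑ i, ∑ j, X i j ≤ (Fintype.card V : ℝ) := by
  obtain ⟨B, rfl⟩ := psd_exists_ct hX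
  have htr' : ∑ k, ∑ i, B k i ^ 2 = 1 := by
    rw [← htr]
    simp only [Matrix.trace, Matrix.diag, Matrix.mul_apply, conjTranspose_apply, star_trivial, sq]
    exact Finset.sum_comm
  have h1 : ∑ i, ∑ j, (Bᴴ * B) i j = ∑ k, (∑ i, B k i) ^ 2 := by
    simp only [Matrix.mul_apply, conjTranspose_apply, star_trivial]
    calc ∑ i, ∑ j, ∑ k, B k i * B k j
        = ∑ i, ∑ k, ∑ j, B k i * B k j := Finset.sum_congr rfl fun i _ => Finset.sum_comm
      _ = ∑ k, ∑ i, ∑ j, B k i * B k j := Finset.sum_comm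
      _ = ∑ k, (∑ i, B k i) ^ 2 := by
          refine Finset.sum_congr rfl fun k _ => ?_
          rw [sq, Finset.sum_mul_sum]
  rw [h1]
  calc ∑ k, (∑ i, B k i) ^ 2 ≤ ∑ k : V, (Fintype.card V : ℝ) * ∑ i, B k i ^ 2 := by
        refine Finset.sum_le_sum fun k _ => ?_
        have := Finset.sum_mul_sq_le_sq_mul_sq Finset.univ (fun _ => (1:ℝ)) (B k)
        simpa [Finset.card_univ] using this
    _ = (Fintype.card V : ℝ) := by rw [← Finset.mul_sum, htr', mul_one]

end helpers

/- ===== stab2 helpers ===== -/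

lemma stab2_nonneg {W : Type} (H : SimpleGraph W) {M : Matrix W W ℝ}
    (hM : M ∈ stab2 H) (i j : W) : 0 ≤ M i j := by
  have hsub : stab2 H ⊆ {M : Matrix W W ℝ | ∀ i j, 0 ≤ M i j} := by
    apply convexHull_min
    · rintro M ⟨s, hs, -, rfl⟩ i j
      rw [vecMulVec_apply]
      rcases hs i with h | h <;> rcases hs j with h' | h' <;> simp [h, h']
    · intro A hA B hB a b ha hb hab i j
      have : (a • A + b • B) i j = a * A i j + b * B i j := by
        simp [Matrix.add_apply]
      rw [this]
      exact add_nonneg (mul_nonneg ha (hA i j)) (mul_nonneg hb (hB i j))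
  exact hsub hM i j

lemma zero_mem_stab2 {W : Type} (H : SimpleGraph W) : (0 : Matrix W W ℝ) ∈ stab2 H := by
  apply subset_convexHull
  exact ⟨0, fun i => Or.inl rfl, fun i j _ => by simp, by ext i j; simp [vecMulVec_apply]⟩

lemma const_mem_stab2 {W : Type} [Subsingleton W] (H : SimpleGraph W) {a : ℝ}
    (h0 : 0 ≤ a) (h1 : a ≤ 1) : (Matrix.of fun _ _ => a) ∈ stab2 H := by
  have h1mem : (Matrix.vecMulVec (fun _ => (1:ℝ)) (fun _ => (1:ℝ))) ∈ stab2 H := by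
    apply subset_convexHull
    refine ⟨fun _ => 1, fun i => Or.inr rfl, fun i j hij => ?_, rfl⟩
    exact absurd (Subsingleton.elim i j ▸ hij) (H.irrefl)
  have h0mem : (0 : Matrix W W ℝ) ∈ stab2 H := zero_mem_stab2 H
  have := (convex_convexHull ℝ _) h1mem h0mem h0 (by linarith : (0:ℝ) ≤ 1 - a) (by ring)
  have heq : (Matrix.of fun _ _ => a) = a • vecMulVec (fun _ => (1:ℝ)) (fun _ => (1:ℝ)) +
      (1 - a) • (0 : Matrix W W ℝ) := by
    ext i j
    simp [vecMulVec_apply]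
  rw [heq]; exact this

lemma subsingleton_mem_stab2 {W : Type} [Subsingleton W] (H : SimpleGraph W)
    (M : Matrix W W ℝ) (h0 : ∀ i, 0 ≤ M i i) (h1 : ∀ i, M i i ≤ 1) : M ∈ stab2 H := by
  cases isEmpty_or_nonempty W with
  | inl he =>
    have : M = 0 := by ext i j; exact (he.false i).elim
    rw [this]; exact zero_mem_stab2 H
  | inr hne =>
    obtain ⟨w⟩ := hne
    have : M = Matrix.of fun _ _ => M w w := by
      ext i j
      rw [Subsingleton.elim i w, Subsingleton.elim j w]
      rfl
    rw [this]
    exact const_mem_stab2 H (h0 w) (h1 w)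
section zhelpers
open Matrix
variable {V : Type} [Fintype V]

/-- Quadratic inequalities from Theta1 feasibility. -/
lemma theta1_quad {G : SimpleGraph V} {x : V → ℝ} {X : Matrix V V ℝ}
    (hf : Theta1Feasible G x X) (v : V → ℝ) (a : ℝ) :
    0 ≤ v ⬝ᵥ X *ᵥ v + 2 * a * (x ⬝ᵥ v) + a ^ 2 :=
  (block_psd_quad hf.1).2 v a

lemma theta1_x_le_one {G : SimpleGraph V} {x : V → ℝ} {X : Matrix V V ℝ}
    (hf : Theta1Feasible G x X) (i : V) : x i ≤ 1 := by
  have h := theta1_quad hf (Pi.single i 1) (-1)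
  rw [single_quad, dotProduct_single, hf.2.1 i] at h
  nlinarith

lemma theta1_x_nonneg {G : SimpleGraph V} {x : V → ℝ} {X : Matrix V V ℝ}
    (hf : Theta1Feasible G x X) (i : V) : 0 ≤ x i := by
  have h := quad_nonneg (psd_of_block hf.1) (Pi.single i 1)
  rw [single_quad, hf.2.1 i] at h
  exact h

lemma theta1_sq_le {G : SimpleGraph V} {x : V → ℝ} {X : Matrix V V ℝ}
    (hf : Theta1Feasible G x X) : (∑ i, x i) ^ 2 ≤ ∑ i, ∑ j, X i j := by
  have h := theta1_quad hf (fun _ => 1) (-(∑ i, x i))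
  rw [dot_one_mulVec_one, dot_ones] at h
  nlinarith

lemma zero_theta1 (G : SimpleGraph V) : Theta1Feasible G 0 0 := by
  refine ⟨block_psd_of 0 0 (by simp) (fun v => by simp), by simp, by simp⟩

lemma bddAbove_zJ (G : SimpleGraph V) (J : Set (Set V)) :
    BddAbove {t | ∃ (x : V → ℝ) (X : Matrix V V ℝ), Theta1Feasible G x X ∧
      (∀ I ∈ J, X.submatrix (fun a : I => (a : V)) (fun a : I => (a : V)) ∈
        stab2 (G.induce I)) ∧ t = ∑ i, x i} := by
  refine ⟨(Fintype.card V : ℝ), ?_⟩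
  rintro t ⟨x, X, hf, -, rfl⟩
  calc ∑ i, x i ≤ ∑ _i : V, (1:ℝ) := Finset.sum_le_sum fun i _ => theta1_x_le_one hf i
    _ = (Fintype.card V : ℝ) := by simp

lemma zero_mem_zJ (G : SimpleGraph V) (J : Set (Set V)) :
    (0:ℝ) ∈ {t | ∃ (x : V → ℝ) (X : Matrix V V ℝ), Theta1Feasible G x X ∧
      (∀ I ∈ J, X.submatrix (fun a : I => (a : V)) (fun a : I => (a : V)) ∈
        stab2 (G.induce I)) ∧ t = ∑ i, x i} := by
  refine ⟨0, 0, zero_theta1 G, fun I _ => ?_, by simp⟩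
  rw [Matrix.submatrix_zero]
  exact zero_mem_stab2 _

lemma bddAbove_theta (G : SimpleGraph V) :
    BddAbove {t | ∃ X : Matrix V V ℝ, X.PosSemidef ∧ X.trace = 1 ∧
      (∀ i j, G.Adj i j → X i j = 0) ∧ t = ∑ i, ∑ j, X i j} := by
  refine ⟨(Fintype.card V : ℝ), ?_⟩
  rintro t ⟨X, h1, h2, -, rfl⟩
  exact theta_le_card h1 h2

lemma bddAbove_thetaStar (G : SimpleGraph V) :
    BddAbove {t | ∃ X : Matrix V V ℝ, X.PosSemidef ∧ (∀ i j, 0 ≤ X i j) ∧ X.trace = 1 ∧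
      (∀ i j, G.Adj i j → X i j = 0) ∧ t = ∑ i, ∑ j, X i j} := by
  refine ⟨(Fintype.card V : ℝ), ?_⟩
  rintro t ⟨X, h1, -, h2, -, rfl⟩
  exact theta_le_card h1 h2

lemma diag_witness [Nonempty V] (G : SimpleGraph V) :
    (1:ℝ) ∈ {t | ∃ X : Matrix V V ℝ, X.PosSemidef ∧ (∀ i j, 0 ≤ X i j) ∧ X.trace = 1 ∧
      (∀ i j, G.Adj i j → X i j = 0) ∧ t = ∑ i, ∑ j, X i j} := by
  classical
  obtain ⟨i0⟩ := ‹Nonempty V›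
  refine ⟨Matrix.diagonal (Pi.single i0 1), ?_, ?_, ?_, ?_, ?_⟩
  · refine posSemidef_diagonal_iff.mpr fun i => ?_
    rcases eq_or_ne i i0 with h | h <;> simp [Pi.single_apply, h]
  · intro i j
    rcases eq_or_ne i j with h | h
    · subst h
      rw [Matrix.diagonal_apply_eq]
      rcases eq_or_ne i i0 with h | h <;> simp [Pi.single_apply, h]
    · rw [Matrix.diagonal_apply_ne _ h]
  · simp [Matrix.trace_diagonal]
  · intro i j hij
    exact Matrix.diagonal_apply_ne _ hij.ne
  · have : ∀ i, ∑ j, Matrix.diagonal (Pi.single i0 (1:ℝ)) i j = (Pi.single i0 (1:ℝ) : V → ℝ) i := by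
      intro i
      rw [Finset.sum_eq_single i (fun j _ hji => Matrix.diagonal_apply_ne' _ hji)
        (fun h => absurd (Finset.mem_univ i) h)]
      exact Matrix.diagonal_apply_eq _ i
    rw [Finset.sum_congr rfl fun i _ => this i]
    simp

lemma thetaStar_nonneg (G : SimpleGraph V) : 0 ≤ thetaStar G := by
  cases isEmpty_or_nonempty V with
  | inl he =>
    have : {t | ∃ X : Matrix V V ℝ, X.PosSemidef ∧ (∀ i j, 0 ≤ X i j) ∧ X.trace = 1 ∧
        (∀ i j, G.Adj i j → X i j = 0) ∧ t = ∑ i, ∑ j, X i j} = ∅ := by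
      ext t
      simp only [Set.mem_setOf_eq, Set.mem_empty_iff_false, iff_false]
      rintro ⟨X, -, -, htr, -, -⟩
      have : X.trace = 0 := by simp [Matrix.trace]
      rw [this] at htr
      exact one_ne_zero htr.symm
    rw [thetaStar, this, Real.sSup_empty]
  | inr hne =>
    have h1 : (1:ℝ) ≤ thetaStar G := le_csSup (bddAbove_thetaStar G) (diag_witness G)
    linarith

lemma theta_nonneg (G : SimpleGraph V) : 0 ≤ lovaszTheta G := by
  cases isEmpty_or_nonempty V with
  | inl he =>
    have : {t | ∃ X : Matrix V V ℝ, X.PosSemidef ∧ X.trace = 1 ∧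
        (∀ i j, G.Adj i j → X i j = 0) ∧ t = ∑ i, ∑ j, X i j} = ∅ := by
      ext t
      simp only [Set.mem_setOf_eq, Set.mem_empty_iff_false, iff_false]
      rintro ⟨X, -, htr, -, -⟩
      have : X.trace = 0 := by simp [Matrix.trace]
      rw [this] at htr
      exact one_ne_zero htr.symm
    rw [lovaszTheta, this, Real.sSup_empty]
  | inr hne =>
    obtain ⟨X, h1, h2, h3, h4, h5⟩ := diag_witness (V := V) G
    have : (1:ℝ) ≤ lovaszTheta G := le_csSup (bddAbove_theta G) ⟨X, h1, h3, h4, h5⟩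
    linarith

end zhelpers
section mainhelpers
open Matrix
variable {V : Type} [Fintype V]

lemma subsingleton_coe_of_ncard_le_one {I : Set V} (h : I.ncard ≤ 1) :
    Subsingleton ↥I :=
  ⟨fun a b => Subtype.ext (((Set.ncard_le_one (Set.toFinite I)).mp h) _ a.2 _ b.2)⟩

lemma z1_constraints {G : SimpleGraph V} {x : V → ℝ} {X : Matrix V V ℝ}
    (hd : ∀ i, X i i = x i) (h0 : ∀ i, 0 ≤ x i) (h1 : ∀ i, x i ≤ 1) :
    ∀ I ∈ {I : Set V | I.ncard = min 1 (Fintype.card V)},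
      X.submatrix (fun a : I => (a : V)) (fun a : I => (a : V)) ∈ stab2 (G.induce I) := by
  intro I hI
  have hle : I.ncard ≤ 1 := by
    have hI' : I.ncard = min 1 (Fintype.card V) := hI
    have := min_le_left 1 (Fintype.card V)
    omega
  haveI := subsingleton_coe_of_ncard_le_one hle
  apply subsingleton_mem_stab2
  · intro p
    show 0 ≤ X (p : V) (p : V)
    rw [hd]; exact h0 _
  · intro p
    show X (p : V) (p : V) ≤ 1
    rw [hd]; exact h1 _

lemma extract {G : SimpleGraph V} {x : V → ℝ} {X : Matrix V V ℝ}
    (hf : Theta1Feasible G x X) (ht : 0 < ∑ i, x i) :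
    ∃ Y : Matrix V V ℝ, Y.PosSemidef ∧ Y.trace = 1 ∧ (∀ i j, G.Adj i j → Y i j = 0) ∧
      (∑ i, x i) ≤ ∑ i, ∑ j, Y i j ∧ ((∀ i j, 0 ≤ X i j) → ∀ i j, 0 ≤ Y i j) := by
  set t := ∑ i, x i with htdef
  have hXpsd := psd_of_block hf.1
  have hsym := (block_psd_quad hf.1).1
  refine ⟨t⁻¹ • X, Matrix.PosSemidef.of_dotProduct_mulVec_nonneg ?_ ?_, ?_, ?_, ?_, ?_⟩
  · show _ = _
    ext i j
    simp [conjTranspose_apply, Matrix.smul_apply, hsym i j]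
  · intro v
    have h0 := quad_nonneg hXpsd v
    have heq : star v ⬝ᵥ (t⁻¹ • X) *ᵥ v = t⁻¹ * (v ⬝ᵥ X *ᵥ v) := by
      rw [star_trivial, smul_mulVec, dotProduct_smul, smul_eq_mul]
    rw [heq]
    exact mul_nonneg (inv_nonneg.mpr ht.le) h0
  · have : X.trace = t := by
      simp only [Matrix.trace, Matrix.diag]
      rw [htdef]
      exact Finset.sum_congr rfl fun i _ => hf.2.1 i
    rw [Matrix.trace_smul, this, smul_eq_mul, inv_mul_cancel₀ ht.ne']
  · intro i j hij
    have : X i j = 0 := hf.2.2 i j hij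
    simp [Matrix.smul_apply, this]
  · have hsum : ∑ i, ∑ j, (t⁻¹ • X) i j = t⁻¹ * ∑ i, ∑ j, X i j := by
      rw [Finset.mul_sum]
      refine Finset.sum_congr rfl fun i _ => ?_
      rw [Finset.mul_sum]
      exact Finset.sum_congr rfl fun j _ => by simp [Matrix.smul_apply]
    rw [hsum]
    have hsq := theta1_sq_le hf
    rw [le_inv_mul_iff₀ ht]
    nlinarith
  · intro hnn i j
    have : (t⁻¹ • X) i j = t⁻¹ * X i j := by simp [Matrix.smul_apply]
    rw [this]
    exact mul_nonneg (inv_nonneg.mpr ht.le) (hnn i j)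

lemma construct {G : SimpleGraph V} {Y : Matrix V V ℝ}
    (hY : Y.PosSemidef) (htr : Y.trace = 1) (hE : ∀ i j, G.Adj i j → Y i j = 0)
    (ht : 0 < ∑ i, ∑ j, Y i j) :
    ∃ (x : V → ℝ) (X : Matrix V V ℝ), Theta1Feasible G x X ∧
      (∀ i, 0 ≤ x i) ∧ (∀ i, x i ≤ 1) ∧ ∑ i, ∑ j, Y i j ≤ ∑ i, x i := by
  classical
  set t := ∑ i, ∑ j, Y i j with htdef
  have hsymY : ∀ i j, Y i j = Y j i := by
    intro i j
    have := hY.1.apply i j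
    rw [star_trivial] at this
    exact this.symm
  set c : V → ℝ := fun i => ∑ j, Y i j with hcdef
  have hct : ∑ i, c i = t := rfl
  have hdnn : ∀ i, 0 ≤ Y i i := by
    intro i
    have := quad_nonneg hY (Pi.single i 1)
    rwa [single_quad] at this
  have htr' : ∑ i, Y i i = 1 := by simpa [Matrix.trace, Matrix.diag] using htr
  have hone : (fun _ => (1:ℝ)) ⬝ᵥ Y *ᵥ (fun _ => (1:ℝ)) = t := dot_one_mulVec_one Y
  have hcs : ∀ i, c i ^ 2 ≤ t * Y i i := by
    intro i
    have h := psd_cs hY (fun _ => 1) (Pi.single i 1)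
    rw [single_quad, hone] at h
    have h2 : (fun _ => (1:ℝ)) ⬝ᵥ Y *ᵥ Pi.single i 1 = c i := by
      rw [mulVec_single]
      simp only [dotProduct, one_mul, mul_one]
      exact Finset.sum_congr rfl fun j _ => by simp [hsymY j i]
    rw [h2] at h
    exact h
  have hc0 : ∀ i, Y i i = 0 → c i = 0 := by
    intro i h
    have h1 := hcs i
    rw [h, mul_zero] at h1
    have h2 : c i ^ 2 = 0 := le_antisymm h1 (sq_nonneg _)
    exact (pow_eq_zero_iff two_ne_zero).mp h2
  set e : V → ℝ := fun i => if Y i i = 0 then 0 else c i / Y i i with hedef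
  have hec : ∀ i, e i * c i = e i ^ 2 * Y i i := by
    intro i
    by_cases h : Y i i = 0
    · simp [hedef, h, hc0 i h]
    · have : e i = c i / Y i i := by rw [hedef]; simp [h]
      rw [this]
      field_simp
  set X : Matrix V V ℝ := Matrix.of fun i j => e i * Y i j * e j / t with hXdef
  set x : V → ℝ := fun i => e i * Y i i * e i / t with hxdef
  have hXapp : ∀ i j, X i j = e i * Y i j * e j / t := fun i j => rfl
  have hxapp : ∀ i, x i = e i * Y i i * e i / t := fun i => rfl
  have hdiag : ∀ i, X i i = x i := fun i => rfl
  have hxc : ∀ i, x i = e i * c i / t := by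
    intro i
    rw [hxapp i]
    congr 1
    rw [hec i]
    ring
  have hx0 : ∀ i, 0 ≤ x i := by
    intro i
    rw [hxapp i]
    have h1 : e i * Y i i * e i = e i ^ 2 * Y i i := by ring
    rw [h1]
    exact div_nonneg (mul_nonneg (sq_nonneg _) (hdnn i)) ht.le
  have hx1 : ∀ i, x i ≤ 1 := by
    intro i
    by_cases h : Y i i = 0
    · have he0 : e i = 0 := by rw [hedef]; simp [h]
      rw [hxc i, he0]
      norm_num
    · have hYpos : 0 < Y i i := lt_of_le_of_ne (hdnn i) (Ne.symm h)
      have hee : e i * c i = c i ^ 2 / Y i i := by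
        rw [hedef]
        simp only [if_neg h]
        field_simp
      rw [hxc i, hee, div_div]
      rw [div_le_one (by positivity)]
      calc c i ^ 2 ≤ t * Y i i := hcs i
        _ = Y i i * t := by ring
  have hval : t ≤ ∑ i, x i := by
    have hfg : ∑ i, Real.sqrt (Y i i) * (if Y i i = 0 then 0 else c i / Real.sqrt (Y i i)) = t := by
      rw [← hct]
      refine Finset.sum_congr rfl fun i _ => ?_
      by_cases h : Y i i = 0
      · simp [h, hc0 i h]
      · have hs : Real.sqrt (Y i i) ≠ 0 :=
          ne_of_gt (Real.sqrt_pos.mpr (lt_of_le_of_ne (hdnn i) (Ne.symm h)))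
        rw [if_neg h]
        field_simp
    have hCS := Finset.sum_mul_sq_le_sq_mul_sq Finset.univ (fun i => Real.sqrt (Y i i))
      (fun i => if Y i i = 0 then 0 else c i / Real.sqrt (Y i i))
    rw [hfg] at hCS
    have h1 : ∑ i, Real.sqrt (Y i i) ^ 2 = 1 := by
      rw [← htr']
      exact Finset.sum_congr rfl fun i _ => Real.sq_sqrt (hdnn i)
    have h2 : ∑ i, (if Y i i = 0 then (0:ℝ) else c i / Real.sqrt (Y i i)) ^ 2
        = ∑ i, e i * c i := by
      refine Finset.sum_congr rfl fun i _ => ?_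
      by_cases h : Y i i = 0
      · have he0 : e i = 0 := by rw [hedef]; simp [h]
        rw [if_pos h, he0]
        norm_num
      · have hYpos : 0 < Y i i := lt_of_le_of_ne (hdnn i) (Ne.symm h)
        have hee : e i * c i = c i ^ 2 / Y i i := by
          rw [hedef]
          simp only [if_neg h]
          field_simp
        rw [if_neg h, div_pow, Real.sq_sqrt (hdnn i), hee]
    rw [h1, h2, one_mul] at hCS
    have hsx : ∑ i, x i = (∑ i, e i * c i) / t := by
      rw [Finset.sum_div]
      exact Finset.sum_congr rfl fun i _ => hxc i
    rw [hsx, le_div_iff₀ ht]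
    nlinarith
  have hq : ∀ v, (x ⬝ᵥ v) ^ 2 ≤ v ⬝ᵥ X *ᵥ v := by
    intro v
    set w : V → ℝ := fun i => e i * v i with hwdef
    have A1 : v ⬝ᵥ X *ᵥ v = (w ⬝ᵥ Y *ᵥ w) / t := by
      simp only [dotProduct, mulVec, hXdef, Matrix.of_apply, hwdef, Finset.mul_sum,
        Finset.sum_div]
      refine Finset.sum_congr rfl fun i _ => ?_
      refine Finset.sum_congr rfl fun j _ => ?_
      ring
    have A2 : x ⬝ᵥ v = (c ⬝ᵥ w) / t := by
      simp only [dotProduct, hwdef, Finset.sum_div]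
      refine Finset.sum_congr rfl fun i _ => ?_
      rw [hxc i]
      ring
    have A3 : c ⬝ᵥ w = (fun _ => (1:ℝ)) ⬝ᵥ Y *ᵥ w := by
      have lhs : c ⬝ᵥ w = ∑ i, ∑ j, Y i j * w i := by
        simp only [dotProduct, hcdef, Finset.sum_mul]
      have rhs : (fun _ => (1:ℝ)) ⬝ᵥ Y *ᵥ w = ∑ j, ∑ i, Y i j * w j := by
        have : (fun _ => (1:ℝ)) ⬝ᵥ Y *ᵥ w = ∑ i, ∑ j, Y i j * w j := by
          simp [dotProduct, mulVec]
        rw [this]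
        exact Finset.sum_comm
      rw [lhs, rhs]
      exact Finset.sum_congr rfl fun i _ => Finset.sum_congr rfl fun j _ => by
        rw [hsymY i j]
    have hCSw := psd_cs hY (fun _ => 1) w
    rw [hone] at hCSw
    have hw0 := quad_nonneg hY w
    rw [A1, A2, A3, div_pow, div_le_div_iff₀ (by positivity) ht]
    nlinarith
  have hsymX : ∀ i j, X i j = X j i := by
    intro i j
    rw [hXapp, hXapp, hsymY i j]
    ring
  have hedge : ∀ i j, G.Adj i j → X i j = 0 := by
    intro i j hij
    rw [hXapp, hE i j hij]
    ring
  exact ⟨x, X, ⟨block_psd_of X x hsymX hq, hdiag, hedge⟩, hx0, hx1, hval⟩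

end mainhelpers
theorem stmt18 {V : Type} [Fintype V] (G : SimpleGraph V) :
    zk G 2 ≤ thetaStar G ∧ thetaStar G ≤ zk G 1 ∧ zk G 1 = lovaszTheta G := by
  classical
  have hC : zk G 1 = lovaszTheta G := by
    apply le_antisymm
    · show zJ G _ ≤ _
      unfold zJ
      apply Real.sSup_le _ (theta_nonneg G)
      rintro t ⟨x, X, hf, -, rfl⟩
      rcases le_or_gt (∑ i, x i) 0 with h | h
      · exact h.trans (theta_nonneg G)
      · obtain ⟨Y, h1, h2, h3, h4, -⟩ := extract hf h
        exact le_trans h4 (le_csSup (bddAbove_theta G) ⟨Y, h1, h2, h3, rfl⟩)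
    · show _ ≤ zJ G _
      unfold lovaszTheta
      have hz0 : (0:ℝ) ≤ zJ G {I : Set V | I.ncard = min 1 (Fintype.card V)} :=
        le_csSup (bddAbove_zJ G _) (zero_mem_zJ G _)
      apply Real.sSup_le _ hz0
      rintro t ⟨Y, h1, h2, h3, rfl⟩
      rcases le_or_gt (∑ i, ∑ j, Y i j) 0 with h | h
      · exact h.trans hz0
      · obtain ⟨x, X, hf, hx0, hx1, hval⟩ := construct h1 h2 h3 h
        refine le_trans hval (le_csSup (bddAbove_zJ G _) ?_)
        exact ⟨x, X, hf, z1_constraints hf.2.1 hx0 hx1, rfl⟩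
  have hB : thetaStar G ≤ lovaszTheta G := by
    unfold thetaStar
    apply Real.sSup_le _ (theta_nonneg G)
    rintro t ⟨X, h1, h2, h3, h4, rfl⟩
    exact le_csSup (bddAbove_theta G) ⟨X, h1, h3, h4, rfl⟩
  have hA : zk G 2 ≤ thetaStar G := by
    show zJ G _ ≤ _
    unfold zJ
    apply Real.sSup_le _ (thetaStar_nonneg G)
    rintro t ⟨x, X, hf, hcons, rfl⟩
    rcases le_or_gt (∑ i, x i) 0 with h | h
    · exact h.trans (thetaStar_nonneg G)
    · have hnn : ∀ i j, 0 ≤ X i j := by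
        intro i j
        rcases eq_or_ne i j with rfl | hij
        · rw [hf.2.1 i]
          exact theta1_x_nonneg hf i
        · have hcard : 1 < Fintype.card V := Fintype.one_lt_card_iff.mpr ⟨i, j, hij⟩
          have hmin : min 2 (Fintype.card V) = 2 := min_eq_left hcard
          have hmem : ({i, j} : Set V).ncard = min 2 (Fintype.card V) := by
            rw [hmin]; exact Set.ncard_pair hij
          have hsub := hcons {i, j} hmem
          have hle := stab2_nonneg _ hsub ⟨i, by simp⟩ ⟨j, by simp⟩
          simpa using hle
      obtain ⟨Y, h1, h2, h3, h4, h5⟩ := extract hf h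
      exact le_trans h4 (le_csSup (bddAbove_thetaStar G) ⟨Y, h1, h5 hnn, h2, h3, rfl⟩)
  exact ⟨hA, hC ▸ hB, hC⟩
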